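/- For every n with 0 < |n| < 1, the set K_{|n|} = {(α,p) ∈ [|n|,1]×ℝ : P_−(α) ≤ p ≤ P_+(α)}, with P_±(α) = 1 + (2/n²)(1−α)(α ± √(α²−n²)), is a convex subset of ℝ². -/

import Mathlib

open MeasureTheory Set Filter Topology

noncomputable section

/-- The critical exponent `P₋(α) = 1 + (2/n²)(1-α)(α - √(α²-n²))`. -/
def Pminus (n a : ℝ) : ℝ := 1 + (2 / n ^ 2) * (1 - a) * (a - Real.sqrt (a ^ 2 - n ^ 2))

/-- The critical exponent `P₊(α) = 1 + (2/n²)(1-α)(α + √(α²-n²))`. -/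
def Pplus (n a : ℝ) : ℝ := 1 + (2 / n ^ 2) * (1 - a) * (a + Real.sqrt (a ^ 2 - n ^ 2))

/-- The admissible set `K_{|n|}` of pairs `(α,p)`. -/
def Kset (n : ℝ) : Set (ℝ × ℝ) :=
  if n = 0 then {q | 0 < q.1 ∧ q.1 ≤ 1 ∧ 1 ≤ q.1 * q.2}
  else {q | |n| ≤ q.1 ∧ q.1 ≤ 1 ∧ Pminus n q.1 ≤ q.2 ∧ q.2 ≤ Pplus n q.1}

/-- The symmetric matrix `Q_{α,p}(v,u)`, with `γ = n/α`, `Γ = (1-α)/(α(p-1))`,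
and the convention `Q_{1,1} = 0`. -/
def Qmat (n a p v u : ℝ) : Matrix (Fin 2) (Fin 2) ℝ :=
  if a = 1 ∧ p = 1 then 0 else
  (p - 1) • !![v ^ (n / a) * (1 + ((1 - a) / (a * (p - 1))) * (u / v - 1)),
      -(v ^ (n / a) + u ^ (n / a)) / 2;
      -(v ^ (n / a) + u ^ (n / a)) / 2,
      u ^ (n / a) * (1 + ((1 - a) / (a * (p - 1))) * (v / u - 1))]

/-- The symmetric matrix `M_{α,p}`, with `γ = n/α`, `Γ = (1-α)/(α(p-1))`,
and the convention `M_{1,1} = 0`. -/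
def Mmat (n a p : ℝ) : Matrix (Fin 2) (Fin 2) ℝ :=
  if a = 1 ∧ p = 1 then 0 else
  (p - 1) • !![(1 : ℝ), -((1 - a) / (a * (p - 1))) + (n / a) / 2;
      -((1 - a) / (a * (p - 1))) + (n / a) / 2,
      ((1 - a) / (a * (p - 1))) * (1 - n / a)]


private lemma sqrt_hasDerivAt (n x : ℝ) (h2 : 0 < x^2 - n^2) :
    HasDerivAt (fun y : ℝ => Real.sqrt (y^2 - n^2)) (x / Real.sqrt (x^2 - n^2)) x := by
  have hspos : 0 < Real.sqrt (x^2 - n^2) := Real.sqrt_pos.2 h2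
  have h1 : HasDerivAt (fun y : ℝ => y^2 - n^2) (2*x) x := by
    simpa using (hasDerivAt_pow 2 x).sub_const (n^2)
  have := (Real.hasDerivAt_sqrt h2.ne').comp x h1
  refine this.congr_deriv ?_
  field_simp

private lemma Pminus_convexOn (n : ℝ) (hn0 : 0 < |n|) (hn1 : |n| < 1) :
    ConvexOn ℝ (Icc |n| 1) (Pminus n) := by
  have hn : n ≠ 0 := abs_pos.mp hn0
  have hn2 : (0:ℝ) < n ^ 2 := by positivity
  apply convexOn_of_hasDerivWithinAt2_nonneg (f' := fun x =>
      (2 / n ^ 2) * (-1 * (x - Real.sqrt (x^2 - n^2)) +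
        (1 - x) * (1 - x / Real.sqrt (x^2 - n^2))))
    (f'' := fun x => (2 / n ^ 2) * (-2 + 2 * (x / Real.sqrt (x^2 - n^2)) +
        (1 - x) * n^2 / Real.sqrt (x^2 - n^2) ^ 3))
    (convex_Icc _ _)
  · unfold Pminus; fun_prop
  · rw [interior_Icc]
    intro x hx
    have h2 : 0 < x^2 - n^2 := by nlinarith [abs_nonneg n, sq_abs n, hx.1]
    have hs' := sqrt_hasDerivAt n x h2
    have hA : HasDerivAt (fun y : ℝ => 1 - y) (-1) x := (hasDerivAt_id x).const_sub 1
    have hB : HasDerivAt (fun y : ℝ => y - Real.sqrt (y^2 - n^2))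
        (1 - x / Real.sqrt (x^2 - n^2)) x := (hasDerivAt_id x).sub hs'
    have h := ((hA.mul hB).const_mul (2 / n ^ 2)).const_add 1
    have heq : Pminus n = fun a : ℝ =>
        1 + 2 / n ^ 2 * ((1 - a) * (a - Real.sqrt (a ^ 2 - n ^ 2))) := by
      funext a; simp only [Pminus]; ring
    rw [heq]
    exact h.hasDerivWithinAt
  · rw [interior_Icc]
    intro x hx
    have h2 : 0 < x^2 - n^2 := by nlinarith [abs_nonneg n, sq_abs n, hx.1]
    have hspos : 0 < Real.sqrt (x^2 - n^2) := Real.sqrt_pos.2 h2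
    have hs2 : Real.sqrt (x^2 - n^2) ^ 2 = x^2 - n^2 := Real.sq_sqrt h2.le
    have hs' := sqrt_hasDerivAt n x h2
    have hA : HasDerivAt (fun y : ℝ => 1 - y) (-1) x := (hasDerivAt_id x).const_sub 1
    have hB : HasDerivAt (fun y : ℝ => y - Real.sqrt (y^2 - n^2))
        (1 - x / Real.sqrt (x^2 - n^2)) x := (hasDerivAt_id x).sub hs'
    have hQ : HasDerivAt (fun y : ℝ => y / Real.sqrt (y^2 - n^2))
        ((1 * Real.sqrt (x^2 - n^2) - x * (x / Real.sqrt (x^2 - n^2))) /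
          Real.sqrt (x^2 - n^2) ^ 2) x := (hasDerivAt_id x).div hs' hspos.ne'
    have hC : HasDerivAt (fun y : ℝ => 1 - y / Real.sqrt (y^2 - n^2))
        (-((1 * Real.sqrt (x^2 - n^2) - x * (x / Real.sqrt (x^2 - n^2))) /
          Real.sqrt (x^2 - n^2) ^ 2)) x := hQ.const_sub 1
    have h := ((hB.const_mul (-1 : ℝ)).add (hA.mul hC)).const_mul (2 / n ^ 2)
    have hval : (2 / n ^ 2) * (-2 + 2 * (x / Real.sqrt (x^2 - n^2)) +
          (1 - x) * n^2 / Real.sqrt (x^2 - n^2) ^ 3) =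
        2 / n ^ 2 * (-1 * (1 - x / Real.sqrt (x^2 - n^2)) +
          (-1 * (1 - x / Real.sqrt (x^2 - n^2)) +
            (1 - x) * -((1 * Real.sqrt (x^2 - n^2) - x * (x / Real.sqrt (x^2 - n^2))) /
              Real.sqrt (x^2 - n^2) ^ 2))) := by
      set s := Real.sqrt (x^2 - n^2) with hsdef
      have h1 : s ≠ 0 := hspos.ne'
      have hxn : n ^ 2 = x ^ 2 - s ^ 2 := by linarith
      have hd : x ^ 2 - s ^ 2 ≠ 0 := by rw [← hxn]; exact hn2.ne'
      rw [hxn]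
      field_simp [hd]
      ring
    rw [hval]
    exact h.hasDerivWithinAt
  · rw [interior_Icc]
    intro x hx
    have h2 : 0 < x^2 - n^2 := by nlinarith [abs_nonneg n, sq_abs n, hx.1]
    set s := Real.sqrt (x^2 - n^2)
    have hspos : 0 < s := Real.sqrt_pos.2 h2
    have hs2 : s ^ 2 = x^2 - n^2 := Real.sq_sqrt h2.le
    have hsx : s < x := by nlinarith [hx.1, abs_nonneg n]
    have h1 : (1:ℝ) < x / s := (one_lt_div hspos).2 hsx
    have h3 : (0:ℝ) ≤ (1 - x) * n^2 / s^3 := by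
      have : (0:ℝ) ≤ 1 - x := by linarith [hx.2]
      positivity
    have : (0:ℝ) ≤ -2 + 2 * (x / s) + (1 - x) * n^2 / s ^ 3 := by linarith
    positivity

private lemma Pplus_concaveOn (n : ℝ) (hn0 : 0 < |n|) (hn1 : |n| < 1) :
    ConcaveOn ℝ (Icc |n| 1) (Pplus n) := by
  have hn : n ≠ 0 := abs_pos.mp hn0
  have hn2 : (0:ℝ) < n ^ 2 := by positivity
  apply concaveOn_of_hasDerivWithinAt2_nonpos (f' := fun x =>
      (2 / n ^ 2) * (-1 * (x + Real.sqrt (x^2 - n^2)) +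
        (1 - x) * (1 + x / Real.sqrt (x^2 - n^2))))
    (f'' := fun x => (2 / n ^ 2) * (-2 - 2 * (x / Real.sqrt (x^2 - n^2)) -
        (1 - x) * n^2 / Real.sqrt (x^2 - n^2) ^ 3))
    (convex_Icc _ _)
  · unfold Pplus; fun_prop
  · rw [interior_Icc]
    intro x hx
    have h2 : 0 < x^2 - n^2 := by nlinarith [abs_nonneg n, sq_abs n, hx.1]
    have hs' := sqrt_hasDerivAt n x h2
    have hA : HasDerivAt (fun y : ℝ => 1 - y) (-1) x := (hasDerivAt_id x).const_sub 1
    have hB : HasDerivAt (fun y : ℝ => y + Real.sqrt (y^2 - n^2))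
        (1 + x / Real.sqrt (x^2 - n^2)) x := (hasDerivAt_id x).add hs'
    have h := ((hA.mul hB).const_mul (2 / n ^ 2)).const_add 1
    have heq : Pplus n = fun a : ℝ =>
        1 + 2 / n ^ 2 * ((1 - a) * (a + Real.sqrt (a ^ 2 - n ^ 2))) := by
      funext a; simp only [Pplus]; ring
    rw [heq]
    exact h.hasDerivWithinAt
  · rw [interior_Icc]
    intro x hx
    have h2 : 0 < x^2 - n^2 := by nlinarith [abs_nonneg n, sq_abs n, hx.1]
    have hspos : 0 < Real.sqrt (x^2 - n^2) := Real.sqrt_pos.2 h2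
    have hs2 : Real.sqrt (x^2 - n^2) ^ 2 = x^2 - n^2 := Real.sq_sqrt h2.le
    have hs' := sqrt_hasDerivAt n x h2
    have hA : HasDerivAt (fun y : ℝ => 1 - y) (-1) x := (hasDerivAt_id x).const_sub 1
    have hB : HasDerivAt (fun y : ℝ => y + Real.sqrt (y^2 - n^2))
        (1 + x / Real.sqrt (x^2 - n^2)) x := (hasDerivAt_id x).add hs'
    have hQ : HasDerivAt (fun y : ℝ => y / Real.sqrt (y^2 - n^2))
        ((1 * Real.sqrt (x^2 - n^2) - x * (x / Real.sqrt (x^2 - n^2))) /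
          Real.sqrt (x^2 - n^2) ^ 2) x := (hasDerivAt_id x).div hs' hspos.ne'
    have hC : HasDerivAt (fun y : ℝ => 1 + y / Real.sqrt (y^2 - n^2))
        ((1 * Real.sqrt (x^2 - n^2) - x * (x / Real.sqrt (x^2 - n^2))) /
          Real.sqrt (x^2 - n^2) ^ 2) x := hQ.const_add 1
    have h := ((hB.const_mul (-1 : ℝ)).add (hA.mul hC)).const_mul (2 / n ^ 2)
    have hval : (2 / n ^ 2) * (-2 - 2 * (x / Real.sqrt (x^2 - n^2)) -
          (1 - x) * n^2 / Real.sqrt (x^2 - n^2) ^ 3) =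
        2 / n ^ 2 * (-1 * (1 + x / Real.sqrt (x^2 - n^2)) +
          (-1 * (1 + x / Real.sqrt (x^2 - n^2)) +
            (1 - x) * ((1 * Real.sqrt (x^2 - n^2) - x * (x / Real.sqrt (x^2 - n^2))) /
              Real.sqrt (x^2 - n^2) ^ 2))) := by
      set s := Real.sqrt (x^2 - n^2) with hsdef
      have h1 : s ≠ 0 := hspos.ne'
      have hxn : n ^ 2 = x ^ 2 - s ^ 2 := by linarith
      have hd : x ^ 2 - s ^ 2 ≠ 0 := by rw [← hxn]; exact hn2.ne'
      rw [hxn]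
      field_simp [hd]
      ring
    rw [hval]
    exact h.hasDerivWithinAt
  · rw [interior_Icc]
    intro x hx
    have h2 : 0 < x^2 - n^2 := by nlinarith [abs_nonneg n, sq_abs n, hx.1]
    set s := Real.sqrt (x^2 - n^2)
    have hspos : 0 < s := Real.sqrt_pos.2 h2
    have hxpos : 0 < x := lt_of_le_of_lt (abs_nonneg n) hx.1
    have h3 : (0:ℝ) ≤ (1 - x) * n^2 / s^3 := by
      have : (0:ℝ) ≤ 1 - x := by linarith [hx.2]
      positivity
    have h4 : (0:ℝ) ≤ x / s := by positivity
    have h5 : -2 - 2 * (x / s) - (1 - x) * n^2 / s ^ 3 ≤ 0 := by linarith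
    have h6 : (0:ℝ) ≤ 2 / n ^ 2 := by positivity
    exact mul_nonpos_iff.mpr (Or.inl ⟨h6, h5⟩)

/-- for every `n` with `0 < |n| < 1`, the admissible set `K_{|n|}` is a
convex subset of `ℝ²`. -/
theorem Kset_convex (n : ℝ) (hn0 : 0 < |n|) (hn1 : |n| < 1) :
    Convex ℝ (Kset n) := by
  have hn : n ≠ 0 := abs_pos.mp hn0
  have h1 := (Pminus_convexOn n hn0 hn1).convex_epigraph
  have h2 := (Pplus_concaveOn n hn0 hn1).convex_hypograph
  have hset : Kset n = {p : ℝ × ℝ | p.1 ∈ Icc |n| 1 ∧ Pminus n p.1 ≤ p.2} ∩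
      {p : ℝ × ℝ | p.1 ∈ Icc |n| 1 ∧ p.2 ≤ Pplus n p.1} := by
    rw [Kset, if_neg hn]
    ext q
    simp only [Set.mem_setOf_eq, Set.mem_inter_iff, Set.mem_Icc]
    tauto
  rw [hset]
  exact h1.inter h2
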